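/- arXiv:1508.00858 — 2 statements merged into one kernel-verified Lean document; each statement's English description precedes it below -/
import Mathlib

section
/- If g is 1-strongly convex in the p-norm on Q (p ∈ {1,2}), then the dual function φ(y) = min_{x∈Q} { g(x) + ⟨y, Ax − b⟩ } is concave, differentiable, with ∇φ(y) = A x(y) − b where x(y) is the unique minimizer, and −φ has L₂-Lipschitz gradient in the 2-norm with L₂ = max_{‖h‖_p ≤ 1} ‖Ah‖₂². In particular L₂ = σ_max(A) for p = 2 and L₂ = max_k ‖A^{(k)}‖₂² for p = 1. -/
open BigOperators Matrix

private noncomputable def Np {n : ℕ} (p : ℝ) (h : Fin n → ℝ) : ℝ := (∑ j, |h j| ^ p) ^ (1/p)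

private lemma np_nonneg {n : ℕ} {p : ℝ} (hp : p = 1 ∨ p = 2) (h : Fin n → ℝ) : 0 ≤ Np p h := by
  refine Real.rpow_nonneg (Finset.sum_nonneg fun j _ => ?_) _
  exact Real.rpow_nonneg (abs_nonneg _) _

private lemma np_eq_zero {n : ℕ} {p : ℝ} (hp : p = 1 ∨ p = 2) {h : Fin n → ℝ}
    (h0 : Np p h = 0) : h = 0 := by
  have hp0 : p ≠ 0 := by rcases hp with rfl | rfl <;> norm_num
  have hs : (0:ℝ) ≤ ∑ j, |h j| ^ p :=
    Finset.sum_nonneg fun j _ => Real.rpow_nonneg (abs_nonneg _) _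
  rw [Np, Real.rpow_eq_zero hs (by simp [hp0])] at h0
  have := (Finset.sum_eq_zero_iff_of_nonneg
    (fun j _ => Real.rpow_nonneg (abs_nonneg _) p)).1 h0
  funext j
  have hj := this j (Finset.mem_univ j)
  have : |h j| = 0 := by
    rwa [Real.rpow_eq_zero (abs_nonneg _) hp0] at hj
  simpa using this

private lemma np_smul {n : ℕ} {p : ℝ} (hp : p = 1 ∨ p = 2) (c : ℝ) (h : Fin n → ℝ) :
    Np p (c • h) = |c| * Np p h := by
  have hp0 : p ≠ 0 := by rcases hp with rfl | rfl <;> norm_num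
  have hs : (0:ℝ) ≤ ∑ j, |h j| ^ p :=
    Finset.sum_nonneg fun j _ => Real.rpow_nonneg (abs_nonneg _) _
  have h1 : ∀ j : Fin n, |(c • h) j| ^ p = |c| ^ p * |h j| ^ p := by
    intro j
    rw [Pi.smul_apply, smul_eq_mul, abs_mul, Real.mul_rpow (abs_nonneg _) (abs_nonneg _)]
  rw [Np, Np]
  simp only [h1, ← Finset.mul_sum]
  rw [Real.mul_rpow (Real.rpow_nonneg (abs_nonneg _) _) hs,
    ← Real.rpow_mul (abs_nonneg c), mul_one_div_cancel hp0, Real.rpow_one]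

private lemma np_coord_le {n : ℕ} {p : ℝ} (hp : p = 1 ∨ p = 2) {h : Fin n → ℝ}
    (h1 : Np p h ≤ 1) (j : Fin n) : |h j| ≤ 1 := by
  have hp0 : 0 < p := by rcases hp with rfl | rfl <;> norm_num
  have hs : (0:ℝ) ≤ ∑ j, |h j| ^ p :=
    Finset.sum_nonneg fun j _ => Real.rpow_nonneg (abs_nonneg _) _
  have hsum : (∑ j, |h j| ^ p) ≤ 1 := by
    have := Real.rpow_le_rpow (Real.rpow_nonneg hs _) h1 hp0.le
    rwa [← Real.rpow_mul hs, one_div_mul_cancel hp0.ne', Real.rpow_one, Real.one_rpow] at this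
  have hj : |h j| ^ p ≤ 1 :=
    le_trans (Finset.single_le_sum (fun j _ => Real.rpow_nonneg (abs_nonneg _) p)
      (Finset.mem_univ j)) hsum
  by_contra hc
  push_neg at hc
  have : (1:ℝ) < |h j| ^ p := by
    have := Real.one_lt_rpow_iff_of_pos (x := |h j|) (by positivity) (y := p)
    exact this.2 (Or.inl ⟨hc, hp0⟩)
  linarith

private lemma sumsq_bound {m n : ℕ} {p : ℝ} (hp : p = 1 ∨ p = 2)
    (A : Matrix (Fin m) (Fin n) ℝ) {L2 : ℝ}
    (hL2 : L2 = sSup {w : ℝ | ∃ h : Fin n → ℝ,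
      (∑ j, |h j| ^ p) ^ (1 / p) ≤ 1 ∧ w = ∑ i, (A.mulVec h i) ^ 2}) :
    0 ≤ L2 ∧ (∀ h : Fin n → ℝ, ∑ i, (A.mulVec h i) ^ 2 ≤ L2 * (Np p h) ^ 2) ∧
      BddAbove {w : ℝ | ∃ h : Fin n → ℝ,
      (∑ j, |h j| ^ p) ^ (1 / p) ≤ 1 ∧ w = ∑ i, (A.mulVec h i) ^ 2} := by
  have hp0 : p ≠ 0 := by rcases hp with rfl | rfl <;> norm_num
  set S := {w : ℝ | ∃ h : Fin n → ℝ,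
      (∑ j, |h j| ^ p) ^ (1 / p) ≤ 1 ∧ w = ∑ i, (A.mulVec h i) ^ 2} with hS
  have hf : Continuous (fun h : Fin n → ℝ => ∑ i, (A.mulVec h i) ^ 2) := by
    apply continuous_finset_sum
    intro i _
    apply Continuous.pow
    unfold Matrix.mulVec dotProduct
    exact continuous_finset_sum _ fun j _ => (continuous_const.mul (continuous_apply j))
  have hK : IsCompact (Set.univ.pi fun _ : Fin n => Set.Icc (-1:ℝ) 1) :=
    isCompact_univ_pi fun _ => isCompact_Icc
  have hbdd : BddAbove S := by
    have hsub : S ⊆ (fun h : Fin n → ℝ => ∑ i, (A.mulVec h i) ^ 2) ''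
        (Set.univ.pi fun _ : Fin n => Set.Icc (-1:ℝ) 1) := by
      rintro w ⟨h, hh1, rfl⟩
      refine ⟨h, fun j _ => ?_, rfl⟩
      exact abs_le.1 (np_coord_le hp hh1 j)
    exact (hK.image hf).bddAbove.mono hsub
  have h0S : (0:ℝ) ∈ S := by
    refine ⟨0, ?_, by simp⟩
    have : ∀ j : Fin n, |(0:Fin n → ℝ) j| ^ p = 0 := by
      intro j; simp [Real.zero_rpow hp0]
    simp only [this, Finset.sum_const_zero]
    rw [Real.zero_rpow (by simp [hp0])]
    norm_num
  have hL2nn : 0 ≤ L2 := hL2 ▸ le_csSup hbdd h0S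
  refine ⟨hL2nn, fun h => ?_, hbdd⟩
  by_cases hz : Np p h = 0
  · have : h = 0 := np_eq_zero hp hz
    subst this
    simp [hz, Real.zero_rpow hp0]
  · have hpos : 0 < Np p h := lt_of_le_of_ne (np_nonneg hp h) (Ne.symm hz)
    set c := Np p h
    have hnp' : Np p (c⁻¹ • h) = 1 := by
      rw [np_smul hp, abs_of_pos (inv_pos.2 hpos), inv_mul_cancel₀ hz]
    have hmem : (∑ i, (A.mulVec (c⁻¹ • h) i) ^ 2) ∈ S := ⟨_, le_of_eq hnp', rfl⟩
    have hle : (∑ i, (A.mulVec (c⁻¹ • h) i) ^ 2) ≤ L2 := hL2 ▸ le_csSup hbdd hmem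
    have heq : (∑ i, (A.mulVec (c⁻¹ • h) i) ^ 2) = c⁻¹ ^ 2 * ∑ i, (A.mulVec h i) ^ 2 := by
      rw [Matrix.mulVec_smul]
      simp [Finset.mul_sum, mul_pow]
  -- smul on Fin m → ℝ pointwise
    rw [heq] at hle
    calc ∑ i, (A.mulVec h i) ^ 2 = c ^ 2 * (c⁻¹ ^ 2 * ∑ i, (A.mulVec h i) ^ 2) := by
          field_simp
      _ ≤ c ^ 2 * L2 := by
          exact mul_le_mul_of_nonneg_left hle (by positivity)
      _ = L2 * c ^ 2 := by ring

private lemma lin_convex {m n : ℕ} (A : Matrix (Fin m) (Fin n) ℝ) (b : Fin m → ℝ)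
    (y : Fin m → ℝ) (x z : Fin n → ℝ) (t : ℝ) :
    ∑ i, y i * (A.mulVec (t • x + (1-t) • z) i - b i)
      = t * (∑ i, y i * (A.mulVec x i - b i)) + (1-t) * (∑ i, y i * (A.mulVec z i - b i)) := by
  rw [Matrix.mulVec_add, Matrix.mulVec_smul, Matrix.mulVec_smul]
  simp only [Pi.add_apply, Pi.smul_apply, smul_eq_mul, Finset.mul_sum]
  rw [← Finset.sum_add_distrib]
  apply Finset.sum_congr rfl
  intro i _
  ring

private lemma strong_min {m n : ℕ} {p : ℝ} (hp : p = 1 ∨ p = 2)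
    (A : Matrix (Fin m) (Fin n) ℝ) (b : Fin m → ℝ)
    {Q : Set (Fin n → ℝ)} (hQconv : Convex ℝ Q)
    {g : (Fin n → ℝ) → ℝ}
    (hsc : ∀ x ∈ Q, ∀ y ∈ Q, ∀ t : ℝ, 0 ≤ t → t ≤ 1 →
      g (t • x + (1 - t) • y) ≤ t * g x + (1 - t) * g y
        - 1 / 2 * t * (1 - t) * ((∑ j, |x j - y j| ^ p) ^ (1 / p)) ^ 2)
    {xmin : (Fin m → ℝ) → (Fin n → ℝ)}
    (hxmin_mem : ∀ y, xmin y ∈ Q)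
    (hxmin_min : ∀ y : Fin m → ℝ, ∀ x ∈ Q,
      g (xmin y) + (∑ i, y i * (A.mulVec (xmin y) i - b i))
        ≤ g x + (∑ i, y i * (A.mulVec x i - b i)))
    (y : Fin m → ℝ) (x : Fin n → ℝ) (hx : x ∈ Q) :
    g (xmin y) + (∑ i, y i * (A.mulVec (xmin y) i - b i))
      + 1/2 * (Np p (x - xmin y)) ^ 2
      ≤ g x + (∑ i, y i * (A.mulVec x i - b i)) := by
  set x' := xmin y with hx'
  set N := Np p (x - x') with hN
  set Fx := g x + (∑ i, y i * (A.mulVec x i - b i)) with hFx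
  set Fx' := g x' + (∑ i, y i * (A.mulVec x' i - b i)) with hFx'
  have hNeq : ((∑ j, |x j - x' j| ^ p) ^ (1 / p)) = N := by
    rw [hN, Np]; simp [Pi.sub_apply]
  have key : ∀ t : ℝ, 0 < t → t ≤ 1 → 1/2 * (1 - t) * N ^ 2 ≤ Fx - Fx' := by
    intro t ht0 ht1
    have hz : t • x + (1-t) • x' ∈ Q := hQconv hx (hxmin_mem y) ht0.le (by linarith) (by ring)
    have h1 := hxmin_min y _ hz
    have h2 := hsc x hx x' (hxmin_mem y) t ht0.le ht1
    rw [lin_convex] at h1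
    rw [hNeq] at h2
    -- Fx' ≤ g z + t lin x + (1-t) lin x' ≤ t g x + (1-t) g x' - c + t lin x + (1-t) lin x'
    have h3 : Fx' ≤ t * Fx + (1-t) * Fx' - 1/2 * t * (1-t) * N^2 := by
      rw [hFx, hFx']; nlinarith [h1, h2]
    have h4 : t * (1/2 * (1-t) * N^2) ≤ t * (Fx - Fx') := by nlinarith
    exact le_of_mul_le_mul_left (by linarith [h4]) ht0
  have hlim : Filter.Tendsto (fun t : ℝ => 1/2 * (1 - t) * N ^ 2) (nhdsWithin 0 (Set.Ioi 0))
      (nhds (1/2 * N ^ 2)) := by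
    have : Filter.Tendsto (fun t : ℝ => 1/2 * (1 - t) * N ^ 2) (nhds 0)
        (nhds (1/2 * (1 - 0) * N ^ 2)) := by
      apply Continuous.tendsto
      continuity
    simpa using this.mono_left nhdsWithin_le_nhds
  have hev : ∀ᶠ t : ℝ in nhdsWithin 0 (Set.Ioi 0), 1/2 * (1 - t) * N ^ 2 ≤ Fx - Fx' := by
    filter_upwards [Ioc_mem_nhdsGT_of_mem (Set.left_mem_Ico.2 one_pos)] with t ht
    exact key t ht.1 ht.2
  have := le_of_tendsto hlim hev
  linarith

private lemma np_sub_comm {n : ℕ} (p : ℝ) (x y : Fin n → ℝ) :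
    Np p (x - y) = Np p (y - x) := by
  unfold Np
  congr 1
  apply Finset.sum_congr rfl
  intro j _
  rw [Pi.sub_apply, Pi.sub_apply, abs_sub_comm]

private lemma coercivity {m n : ℕ} {p : ℝ} (hp : p = 1 ∨ p = 2)
    (A : Matrix (Fin m) (Fin n) ℝ) (b : Fin m → ℝ)
    {Q : Set (Fin n → ℝ)} (hQconv : Convex ℝ Q)
    {g : (Fin n → ℝ) → ℝ}
    (hsc : ∀ x ∈ Q, ∀ y ∈ Q, ∀ t : ℝ, 0 ≤ t → t ≤ 1 →
      g (t • x + (1 - t) • y) ≤ t * g x + (1 - t) * g y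
        - 1 / 2 * t * (1 - t) * ((∑ j, |x j - y j| ^ p) ^ (1 / p)) ^ 2)
    {xmin : (Fin m → ℝ) → (Fin n → ℝ)}
    (hxmin_mem : ∀ y, xmin y ∈ Q)
    (hxmin_min : ∀ y : Fin m → ℝ, ∀ x ∈ Q,
      g (xmin y) + (∑ i, y i * (A.mulVec (xmin y) i - b i))
        ≤ g x + (∑ i, y i * (A.mulVec x i - b i)))
    (y1 y2 : Fin m → ℝ) :
    (Np p (xmin y1 - xmin y2)) ^ 2
      ≤ ∑ i, (y2 i - y1 i) * (A.mulVec (xmin y1 - xmin y2) i) := by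
  have h1 := strong_min hp A b hQconv hsc hxmin_mem hxmin_min y1 (xmin y2) (hxmin_mem y2)
  have h2 := strong_min hp A b hQconv hsc hxmin_mem hxmin_min y2 (xmin y1) (hxmin_mem y1)
  rw [np_sub_comm] at h1
  set x1 := xmin y1
  set x2 := xmin y2
  have key : ∑ i, (y2 i - y1 i) * (A.mulVec (x1 - x2) i)
      = ((∑ i, y2 i * (A.mulVec x1 i - b i)) - (∑ i, y2 i * (A.mulVec x2 i - b i)))
        - ((∑ i, y1 i * (A.mulVec x1 i - b i)) - (∑ i, y1 i * (A.mulVec x2 i - b i))) := by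
    rw [← Finset.sum_sub_distrib, ← Finset.sum_sub_distrib, ← Finset.sum_sub_distrib]
    apply Finset.sum_congr rfl
    intro i _
    rw [Matrix.mulVec_sub, Pi.sub_apply]
    ring
  rw [key]
  linarith

private lemma lip_key {m n : ℕ} {p : ℝ} (hp : p = 1 ∨ p = 2)
    (A : Matrix (Fin m) (Fin n) ℝ) {L2 : ℝ} (hL2nn : 0 ≤ L2)
    (hbd : ∀ h : Fin n → ℝ, ∑ i, (A.mulVec h i) ^ 2 ≤ L2 * (Np p h) ^ 2)
    (d : Fin n → ℝ) (D : Fin m → ℝ)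
    (hco : (Np p d) ^ 2 ≤ ∑ i, D i * (A.mulVec d i)) :
    ∑ i, (A.mulVec d i) ^ 2 ≤ L2 ^ 2 * ∑ i, (D i) ^ 2 := by
  set a := (Np p d) ^ 2 with ha
  set q := ∑ i, (A.mulVec d i) ^ 2 with hq
  set s := ∑ i, D i * (A.mulVec d i) with hs
  set B := ∑ i, (D i) ^ 2 with hB
  have hCS : s ^ 2 ≤ B * q := Finset.sum_mul_sq_le_sq_mul_sq _ _ _
  have hqa : q ≤ L2 * a := hbd d
  have hq0 : 0 ≤ q := Finset.sum_nonneg fun i _ => sq_nonneg _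
  have hB0 : 0 ≤ B := Finset.sum_nonneg fun i _ => sq_nonneg _
  have ha0 : 0 ≤ a := sq_nonneg _
  -- q ≤ L2 a ≤ L2 s, so q² ≤ L2² s² ≤ L2² B q
  have hs0 : 0 ≤ s := le_trans ha0 hco
  have hqs : q ≤ L2 * s := le_trans hqa (mul_le_mul_of_nonneg_left hco hL2nn)
  rcases eq_or_lt_of_le hq0 with hq0' | hq0'
  · rw [← hq0']; positivity
  · have h1 : q ^ 2 ≤ (L2 * s) ^ 2 := by nlinarith
    have h2 : (L2 * s) ^ 2 ≤ L2 ^ 2 * (B * q) := by nlinarith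
    nlinarith

private lemma eus_norm {m : ℕ} (v : Fin m → ℝ) :
    ‖(WithLp.equiv 2 (Fin m → ℝ)).symm v‖ = Real.sqrt (∑ i, v i ^ 2) := by
  rw [EuclideanSpace.norm_eq]
  congr 1
  apply Finset.sum_congr rfl
  intro i _
  rw [WithLp.equiv_symm_apply, PiLp.toLp_apply, Real.norm_eq_abs, sq_abs]

private lemma eus_norm_sq {m : ℕ} (v : Fin m → ℝ) :
    ‖(WithLp.equiv 2 (Fin m → ℝ)).symm v‖ ^ 2 = ∑ i, v i ^ 2 := by
  rw [eus_norm, Real.sq_sqrt (Finset.sum_nonneg fun i _ => sq_nonneg _)]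

private lemma eus_norm' {m : ℕ} (u : EuclideanSpace ℝ (Fin m)) :
    ‖u‖ = Real.sqrt (∑ i, (u i) ^ 2) := by
  rw [EuclideanSpace.norm_eq]
  congr 1
  exact Finset.sum_congr rfl fun i _ => by rw [Real.norm_eq_abs, sq_abs]

private lemma eus_norm_sq' {m : ℕ} (u : EuclideanSpace ℝ (Fin m)) :
    ‖u‖ ^ 2 = ∑ i, (u i) ^ 2 := by
  rw [eus_norm', Real.sq_sqrt (Finset.sum_nonneg fun i _ => sq_nonneg _)]

private lemma np_two {n : ℕ} (v : Fin n → ℝ) : Np (2:ℝ) v = Real.sqrt (∑ j, v j ^ 2) := by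
  unfold Np
  rw [Real.sqrt_eq_rpow]
  congr 1
  · apply Finset.sum_congr rfl
    intro j _
    rw [show ((2:ℝ) = ((2:ℕ):ℝ)) by norm_num, Real.rpow_natCast, sq_abs]

private lemma np_two_sq {n : ℕ} (v : Fin n → ℝ) : Np (2:ℝ) v ^ 2 = ∑ j, v j ^ 2 := by
  rw [np_two, Real.sq_sqrt (Finset.sum_nonneg fun j _ => sq_nonneg _)]

private lemma quad_eq {m n : ℕ} (A : Matrix (Fin m) (Fin n) ℝ) (v : Fin n → ℝ) :
    ∑ j, (Aᵀ * A).mulVec v j * v j = ∑ i, (A.mulVec v i) ^ 2 := by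
  have h1 : ∑ j, (Aᵀ * A).mulVec v j * v j = v ⬝ᵥ ((Aᵀ * A) *ᵥ v) := by
    rw [dotProduct_comm]
    rfl
  rw [h1, ← Matrix.mulVec_mulVec, Matrix.dotProduct_mulVec, Matrix.vecMul_transpose]
  unfold dotProduct
  exact Finset.sum_congr rfl fun i _ => (sq _).symm

private lemma eig_part {m n : ℕ} (hn : 0 < n) (A : Matrix (Fin m) (Fin n) ℝ)
    {L2 : ℝ} (hL2nn : 0 ≤ L2)
    (hbd : ∀ h : Fin n → ℝ, ∑ i, (A.mulVec h i) ^ 2 ≤ L2 * (Np (2:ℝ) h) ^ 2)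
    (hL2 : L2 = sSup {w : ℝ | ∃ h : Fin n → ℝ,
      (∑ j, |h j| ^ (2:ℝ)) ^ (1 / (2:ℝ)) ≤ 1 ∧ w = ∑ i, (A.mulVec h i) ^ 2}) :
    IsGreatest {μ : ℝ | Module.End.HasEigenvalue (Matrix.toLin' (Aᵀ * A)) μ} L2 := by
  set E := EuclideanSpace ℝ (Fin n)
  set T : E →L[ℝ] E := LinearMap.toContinuousLinearMap (Matrix.toEuclideanLin (Aᵀ * A)) with hT
  have hsym : (↑T : E →ₗ[ℝ] E).IsSymmetric := by
    rw [hT]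
    have : (Aᵀ * A).IsHermitian := Matrix.isHermitian_conjTranspose_mul_self A
    have := Matrix.isHermitian_iff_isSymmetric.1 this
    simpa using this
  have hsa : IsSelfAdjoint T := ContinuousLinearMap.isSelfAdjoint_iff_isSymmetric.2 hsym
  have hTapp : ∀ (x : E) (i : Fin n), (T x) i = (Aᵀ * A).mulVec (x : Fin n → ℝ) i := by
    intro x i
    rw [hT]
    rfl
  have hre : ∀ x : E, T.reApplyInnerSelf x = ∑ i, (A.mulVec (x : Fin n → ℝ) i) ^ 2 := by
    intro x
    rw [ContinuousLinearMap.reApplyInnerSelf_apply, PiLp.inner_apply, ← quad_eq A x]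
    simp only [RCLike.inner_apply, conj_trivial, RCLike.re_to_real]
    apply Finset.sum_congr rfl
    intro j _
    rw [hTapp]
    ring
  -- identify Np with the norm of E
  have hnorm : ∀ x : E, ‖x‖ = Np (2:ℝ) (x : Fin n → ℝ) := by
    intro x
    rw [np_two, EuclideanSpace.norm_eq]
    congr 1
    exact Finset.sum_congr rfl fun i _ => by rw [Real.norm_eq_abs, sq_abs]
  have hnp_def : ∀ h : Fin n → ℝ, (∑ j, |h j| ^ (2:ℝ)) ^ (1 / (2:ℝ)) = Np (2:ℝ) h := fun h => rfl
  set S := {w : ℝ | ∃ h : Fin n → ℝ,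
      (∑ j, |h j| ^ (2:ℝ)) ^ (1 / (2:ℝ)) ≤ 1 ∧ w = ∑ i, (A.mulVec h i) ^ 2} with hSdef
  -- compactness: maximizer on the closed unit ball
  have hcomp : IsCompact (Metric.closedBall (0:E) 1) := isCompact_closedBall _ _
  obtain ⟨x₀, hx₀K, hx₀max⟩ := hcomp.exists_isMaxOn ⟨0, Metric.mem_closedBall_self zero_le_one⟩
    T.reApplyInnerSelf_continuous.continuousOn
  have hball : ∀ x : E, x ∈ Metric.closedBall (0:E) 1 ↔ Np (2:ℝ) (x : Fin n → ℝ) ≤ 1 := by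
    intro x
    rw [Metric.mem_closedBall, dist_zero_right, hnorm]
  have hgreat : IsGreatest S (T.reApplyInnerSelf x₀) := by
    constructor
    · exact ⟨x₀, by rw [hnp_def]; exact (hball x₀).1 hx₀K, hre x₀⟩
    · rintro w ⟨h, hh, rfl⟩
      have : ((WithLp.equiv 2 (Fin n → ℝ)).symm h) ∈ Metric.closedBall (0:E) 1 := by
        rw [hball]
        rw [hnp_def] at hh
        exact hh
      simpa [hre] using hx₀max this
  have hL2eq : L2 = T.reApplyInnerSelf x₀ := by rw [hL2, hgreat.csSup_eq]
  -- find a maximizer on the unit sphere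
  obtain ⟨x₁, hx₁n, hx₁v⟩ : ∃ x₁ : E, ‖x₁‖ = 1 ∧ T.reApplyInnerSelf x₁ = L2 := by
    rcases lt_or_eq_of_le hL2nn with hpos | hzero
    · have hx₀ne : x₀ ≠ 0 := by
        intro h0
        rw [hL2eq, h0, hre] at hpos
        simp at hpos
      have hx₀nn : (0:ℝ) < ‖x₀‖ := norm_pos_iff.2 hx₀ne
      refine ⟨‖x₀‖⁻¹ • x₀, ?_, ?_⟩
      · rw [norm_smul, norm_inv, norm_norm, inv_mul_cancel₀ hx₀nn.ne']
      · have hs := T.reApplyInnerSelf_smul x₀ (c := (‖x₀‖⁻¹ : ℝ))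
        rw [hs]
        have h1 : ‖x₀‖ ≤ 1 := by
          rw [← dist_zero_right]
          exact Metric.mem_closedBall.1 hx₀K
        have hKmem : (‖x₀‖⁻¹ • x₀) ∈ Metric.closedBall (0:E) 1 := by
          rw [Metric.mem_closedBall, dist_zero_right, norm_smul, norm_inv, norm_norm,
            inv_mul_cancel₀ hx₀nn.ne']
        have hle : T.reApplyInnerSelf (‖x₀‖⁻¹ • x₀) ≤ T.reApplyInnerSelf x₀ := hx₀max hKmem
        rw [T.reApplyInnerSelf_smul] at hle
        have hinv : (1:ℝ) ≤ ‖x₀‖⁻¹ := by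
          rw [le_inv_comm₀ one_pos hx₀nn]
          simpa using h1
        have hge : T.reApplyInnerSelf x₀ ≤ ‖(‖x₀‖⁻¹ : ℝ)‖ ^ 2 * T.reApplyInnerSelf x₀ := by
          have h3 : (1:ℝ) ≤ ‖(‖x₀‖⁻¹ : ℝ)‖ ^ 2 := by
            rw [Real.norm_eq_abs, abs_of_pos (inv_pos.2 hx₀nn)]
            nlinarith
          nlinarith [hL2eq ▸ hL2nn]
        rw [← hL2eq] at hle hge ⊢
        linarith
    · refine ⟨EuclideanSpace.single ⟨0, hn⟩ (1:ℝ), ?_, ?_⟩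
      · rw [EuclideanSpace.norm_single]; norm_num
      · have hmem : EuclideanSpace.single (⟨0, hn⟩ : Fin n) (1:ℝ) ∈ Metric.closedBall (0:E) 1 := by
          rw [Metric.mem_closedBall, dist_zero_right, EuclideanSpace.norm_single]
          norm_num
        have h1 := hx₀max hmem
        simp only [Set.mem_setOf_eq] at h1
        have h2 : 0 ≤ T.reApplyInnerSelf (EuclideanSpace.single (⟨0, hn⟩ : Fin n) (1:ℝ)) := by
          rw [hre]
          exact Finset.sum_nonneg fun i _ => sq_nonneg _
        rw [← hL2eq] at h1
        linarith [hzero]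
  have hx₁ne : x₁ ≠ 0 := by
    intro h0
    rw [h0, norm_zero] at hx₁n
    norm_num at hx₁n
  have hmax1 : IsMaxOn T.reApplyInnerSelf (Metric.sphere (0:E) ‖x₁‖) x₁ := by
    intro x hx
    have hxn : ‖x‖ = 1 := by
      rw [Metric.mem_sphere, dist_zero_right, hx₁n] at hx
      exact hx
    have hxK : x ∈ Metric.closedBall (0:E) 1 := by
      rw [Metric.mem_closedBall, dist_zero_right, hxn]
    have := hx₀max hxK
    simp only [Set.mem_setOf_eq]
    rw [hx₁v, hL2eq]
    exact this
  have hev := hsa.hasEigenvector_of_isLocalExtrOn hx₁ne (Or.inr hmax1.localize)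
  have hray : T.rayleighQuotient x₁ = L2 := by
    rw [ContinuousLinearMap.rayleighQuotient, hx₁v, hx₁n]
    norm_num
  rw [hray] at hev
  have hTx₁ : T x₁ = L2 • x₁ := Module.End.mem_eigenspace_iff.1 hev.1
  constructor
  · -- L2 is an eigenvalue of toLin' (Aᵀ * A)
    have hv : Matrix.toLin' (Aᵀ * A) (x₁ : Fin n → ℝ) = L2 • (x₁ : Fin n → ℝ) := by
      funext i
      rw [Matrix.toLin'_apply, ← hTapp]
      rw [hTx₁]
      rfl
    have hvne : (x₁ : Fin n → ℝ) ≠ 0 := by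
      intro h0
      apply hx₁ne
      ext i
      exact congrFun h0 i
    exact Module.End.hasEigenvalue_of_hasEigenvector
      ⟨Module.End.mem_eigenspace_iff.2 hv, hvne⟩
  · -- upper bound
    rintro μ hμ
    obtain ⟨v, hv⟩ := hμ.exists_hasEigenvector
    have hvne := hv.2
    have hveq : (Aᵀ * A).mulVec v = μ • v := by
      rw [← Matrix.toLin'_apply, hv.apply_eq_smul]
    have hsum : μ * ∑ j, v j ^ 2 = ∑ i, (A.mulVec v i) ^ 2 := by
      rw [← quad_eq A v, hveq]
      simp only [Pi.smul_apply, smul_eq_mul, Finset.mul_sum]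
      exact Finset.sum_congr rfl fun j _ => by ring
    have hbd' := hbd v
    rw [np_two_sq] at hbd'
    have hpos : 0 < ∑ j, v j ^ 2 := by
      rcases Function.ne_iff.1 hvne with ⟨j, hj⟩
      have hj' : v j ≠ 0 := by simpa using hj
      have : 0 < v j ^ 2 := lt_of_le_of_ne (sq_nonneg _) (Ne.symm (pow_ne_zero 2 hj'))
      exact Finset.sum_pos' (fun j _ => sq_nonneg _) ⟨j, Finset.mem_univ j, this⟩
    have : μ * ∑ j, v j ^ 2 ≤ L2 * ∑ j, v j ^ 2 := by rw [hsum]; exact hbd'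
    exact le_of_mul_le_mul_right (by linarith) hpos

private lemma eus_norm1 {m : ℕ} (v : Fin m → ℝ) :
    ‖(WithLp.equiv 2 (Fin m → ℝ)).symm v‖ = Real.sqrt (∑ i, v i ^ 2) := by
  rw [EuclideanSpace.norm_eq]
  congr 1
  exact Finset.sum_congr rfl fun i _ => by rw [WithLp.equiv_symm_apply, PiLp.toLp_apply, Real.norm_eq_abs, sq_abs]

private lemma col_part {m n : ℕ} (hn : 0 < n) (A : Matrix (Fin m) (Fin n) ℝ) {L2 : ℝ}
    (hL2 : L2 = sSup {w : ℝ | ∃ h : Fin n → ℝ,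
      (∑ j, |h j| ^ (1:ℝ)) ^ (1 / (1:ℝ)) ≤ 1 ∧ w = ∑ i, (A.mulVec h i) ^ 2}) :
    IsGreatest {w : ℝ | ∃ k : Fin n, w = ∑ i, (A i k) ^ 2} L2 := by
  have hcond : ∀ h : Fin n → ℝ,
      (∑ j, |h j| ^ (1:ℝ)) ^ (1 / (1:ℝ)) = ∑ j, |h j| := by
    intro h
    norm_num
  obtain ⟨k₀, -, hk₀⟩ := Finset.exists_max_image Finset.univ (fun k => ∑ i, (A i k) ^ 2)
    ⟨⟨0, hn⟩, Finset.mem_univ _⟩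
  set M := ∑ i, (A i k₀) ^ 2 with hM
  have hM0 : 0 ≤ M := Finset.sum_nonneg fun i _ => sq_nonneg _
  set C : Fin n → EuclideanSpace ℝ (Fin m) :=
    fun j => (WithLp.equiv 2 (Fin m → ℝ)).symm (fun i => A i j) with hC
  have hCnorm : ∀ j, ‖C j‖ ≤ Real.sqrt M := by
    intro j
    rw [hC, eus_norm1]
    exact Real.sqrt_le_sqrt (hk₀ j (Finset.mem_univ j))
  have hub : ∀ w ∈ {w : ℝ | ∃ h : Fin n → ℝ,
      (∑ j, |h j| ^ (1:ℝ)) ^ (1 / (1:ℝ)) ≤ 1 ∧ w = ∑ i, (A.mulVec h i) ^ 2}, w ≤ M := by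
    rintro w ⟨h, hh, rfl⟩
    rw [hcond] at hh
    set V : EuclideanSpace ℝ (Fin m) := (WithLp.equiv 2 (Fin m → ℝ)).symm (A.mulVec h) with hV
    have hVsum : V = ∑ j, h j • C j := by
      ext i
      rw [hV]
      simp only [WithLp.equiv_symm_apply, PiLp.toLp_apply]
      rw [show ((∑ j, h j • C j) i) = ∑ j, h j * A i j from by
        rw [WithLp.ofLp_sum, Finset.sum_apply i Finset.univ (fun j => (h j • C j).ofLp)]
        exact Finset.sum_congr rfl fun j _ => rfl]
      simp [Matrix.mulVec, dotProduct, mul_comm]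
    have hVn : ‖V‖ ≤ Real.sqrt M := by
      rw [hVsum]
      calc ‖∑ j, h j • C j‖ ≤ ∑ j, ‖h j • C j‖ := norm_sum_le _ _
        _ = ∑ j, |h j| * ‖C j‖ := by
            exact Finset.sum_congr rfl fun j _ => by rw [norm_smul, Real.norm_eq_abs]
        _ ≤ ∑ j, |h j| * Real.sqrt M := by
            exact Finset.sum_le_sum fun j _ =>
              mul_le_mul_of_nonneg_left (hCnorm j) (abs_nonneg _)
        _ = (∑ j, |h j|) * Real.sqrt M := by rw [← Finset.sum_mul]
        _ ≤ 1 * Real.sqrt M :=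
            mul_le_mul_of_nonneg_right hh (Real.sqrt_nonneg _)
        _ = Real.sqrt M := one_mul _
    have hVsq : ∑ i, (A.mulVec h i) ^ 2 = ‖V‖ ^ 2 := by
      rw [hV, eus_norm1, Real.sq_sqrt (Finset.sum_nonneg fun i _ => sq_nonneg _)]
    rw [hVsq]
    calc ‖V‖ ^ 2 ≤ Real.sqrt M ^ 2 := by
          exact pow_le_pow_left₀ (norm_nonneg _) hVn 2
      _ = M := Real.sq_sqrt hM0
  have hmem : M ∈ {w : ℝ | ∃ h : Fin n → ℝ,
      (∑ j, |h j| ^ (1:ℝ)) ^ (1 / (1:ℝ)) ≤ 1 ∧ w = ∑ i, (A.mulVec h i) ^ 2} := by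
    refine ⟨(Pi.single k₀ (1:ℝ) : Fin n → ℝ), ?_, ?_⟩
    · rw [hcond]
      have habs : ∀ j : Fin n, |(Pi.single k₀ (1:ℝ) : Fin n → ℝ) j| = if j = k₀ then (1:ℝ) else 0 := by
        intro j
        rw [Pi.single_apply]
        split <;> simp
      rw [Finset.sum_congr rfl fun j _ => habs j]
      simp
    · rw [hM]
      apply Finset.sum_congr rfl
      intro i _
      rw [Matrix.mulVec_single]
      simp
  have hLM : L2 = M := by
    rw [hL2]
    exact IsGreatest.csSup_eq ⟨hmem, hub⟩
  constructor
  · exact ⟨k₀, hLM⟩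
  · rintro w ⟨k, rfl⟩
    rw [hLM]
    exact hk₀ k (Finset.mem_univ k)

/-- If `g` is 1-strongly convex in the `p`-norm (`p ∈ {1,2}`) on compact convex `Q`,
then the dual function `φ(y) = min_{x∈Q} {g(x) + ⟨y, Ax-b⟩}` is concave and
differentiable with `∇φ(y) = A x(y) - b` for the unique minimizer `x(y)`, and the
gradient is Lipschitz in the 2-norm with constant `L₂ = max_{‖h‖_p≤1} ‖Ah‖₂²`;
for `p = 2` this is `σ_max(A)` and for `p = 1` it is `max_k ‖A^{(k)}‖₂²`. -/
theorem dual_function_smoothness (m n : ℕ) (hn : 0 < n)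
    (A : Matrix (Fin m) (Fin n) ℝ) (b : Fin m → ℝ)
    (p : ℝ) (hp : p = 1 ∨ p = 2)
    (Q : Set (Fin n → ℝ)) (hQne : Q.Nonempty) (hQcomp : IsCompact Q)
    (hQconv : Convex ℝ Q)
    (g : (Fin n → ℝ) → ℝ) (hgcont : ContinuousOn g Q)
    (hsc : ∀ x ∈ Q, ∀ y ∈ Q, ∀ t : ℝ, 0 ≤ t → t ≤ 1 →
      g (t • x + (1 - t) • y) ≤ t * g x + (1 - t) * g y
        - 1 / 2 * t * (1 - t) * ((∑ j, |x j - y j| ^ p) ^ (1 / p)) ^ 2)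
    (xmin : (Fin m → ℝ) → (Fin n → ℝ))
    (hxmin_mem : ∀ y, xmin y ∈ Q)
    (hxmin_min : ∀ y : Fin m → ℝ, ∀ x ∈ Q,
      g (xmin y) + (∑ i, y i * (A.mulVec (xmin y) i - b i))
        ≤ g x + (∑ i, y i * (A.mulVec x i - b i)))
    (φ : EuclideanSpace ℝ (Fin m) → ℝ)
    (hφ : ∀ y : EuclideanSpace ℝ (Fin m),
      φ y = sInf {v : ℝ | ∃ x ∈ Q,
        v = g x + ∑ i, y i * (A.mulVec x i - b i)})
    (L2 : ℝ)
    (hL2 : L2 = sSup {w : ℝ | ∃ h : Fin n → ℝ,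
      (∑ j, |h j| ^ p) ^ (1 / p) ≤ 1 ∧ w = ∑ i, (A.mulVec h i) ^ 2}) :
    (∀ y : Fin m → ℝ, ∀ x ∈ Q,
      (g x + (∑ i, y i * (A.mulVec x i - b i))
        = g (xmin y) + ∑ i, y i * (A.mulVec (xmin y) i - b i)) → x = xmin y) ∧
    ConcaveOn ℝ Set.univ φ ∧
    (∀ y : EuclideanSpace ℝ (Fin m),
      HasGradientAt φ
        ((WithLp.equiv 2 (Fin m → ℝ)).symm
          (fun i => A.mulVec (xmin y) i - b i)) y) ∧
    LipschitzWith (Real.toNNReal L2)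
      (fun y : EuclideanSpace ℝ (Fin m) =>
        (WithLp.equiv 2 (Fin m → ℝ)).symm
          (fun i => A.mulVec (xmin y) i - b i)) ∧
    (p = 2 → IsGreatest
      {μ : ℝ | Module.End.HasEigenvalue (Matrix.toLin' (Aᵀ * A)) μ} L2) ∧
    (p = 1 → IsGreatest {w : ℝ | ∃ k : Fin n, w = ∑ i, (A i k) ^ 2} L2) := by
  obtain ⟨hL2nn, hbd, hbdd⟩ := sumsq_bound hp A hL2
  -- value of φ
  have hphi : ∀ y : EuclideanSpace ℝ (Fin m),
      φ y = g (xmin y) + ∑ i, y i * (A.mulVec (xmin y) i - b i) := by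
    intro y
    rw [hφ y]
    apply le_antisymm
    · exact csInf_le ⟨_, by rintro v ⟨x, hx, rfl⟩; exact hxmin_min y x hx⟩
        ⟨xmin y, hxmin_mem y, rfl⟩
    · exact le_csInf ⟨_, ⟨xmin y, hxmin_mem y, rfl⟩⟩
        (by rintro v ⟨x, hx, rfl⟩; exact hxmin_min y x hx)
  -- uniqueness
  have huniq : ∀ y : Fin m → ℝ, ∀ x ∈ Q,
      (g x + (∑ i, y i * (A.mulVec x i - b i))
        = g (xmin y) + ∑ i, y i * (A.mulVec (xmin y) i - b i)) → x = xmin y := by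
    intro y x hx heq
    have h1 := strong_min hp A b hQconv hsc hxmin_mem hxmin_min y x hx
    have hN2 : (Np p (x - xmin y)) ^ 2 ≤ 0 := by linarith
    have hN : Np p (x - xmin y) = 0 := by nlinarith [np_nonneg hp (x - xmin y)]
    have := np_eq_zero hp hN
    have := sub_eq_zero.1 this
    exact this
  refine ⟨huniq, ?_, ?_, ?_, ?_, ?_⟩
  · -- concavity
    refine ⟨convex_univ, ?_⟩
    intro y1 _ y2 _ a c ha hc hac
    simp only [smul_eq_mul]
    set z : EuclideanSpace ℝ (Fin m) := a • y1 + c • y2 with hz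
    have hzi : ∀ i, z i = a * y1 i + c * y2 i := by
      intro i; rw [hz]; simp
    have hlin : ∑ i, z i * (A.mulVec (xmin z) i - b i)
        = a * (∑ i, y1 i * (A.mulVec (xmin z) i - b i))
          + c * (∑ i, y2 i * (A.mulVec (xmin z) i - b i)) := by
      simp only [hzi, Finset.mul_sum, ← Finset.sum_add_distrib]
      exact Finset.sum_congr rfl fun i _ => by ring
    have h1 : φ y1 ≤ g (xmin z) + ∑ i, y1 i * (A.mulVec (xmin z) i - b i) := by
      rw [hphi y1]; exact hxmin_min y1 (xmin z) (hxmin_mem z)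
    have h2 : φ y2 ≤ g (xmin z) + ∑ i, y2 i * (A.mulVec (xmin z) i - b i) := by
      rw [hphi y2]; exact hxmin_min y2 (xmin z) (hxmin_mem z)
    have hzval : φ z = g (xmin z) + ∑ i, z i * (A.mulVec (xmin z) i - b i) := hphi z
    rw [hzval, hlin]
    have : a * φ y1 + c * φ y2
        ≤ a * (g (xmin z) + ∑ i, y1 i * (A.mulVec (xmin z) i - b i))
          + c * (g (xmin z) + ∑ i, y2 i * (A.mulVec (xmin z) i - b i)) := by
      exact add_le_add (mul_le_mul_of_nonneg_left h1 ha) (mul_le_mul_of_nonneg_left h2 hc)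
    refine le_trans this (le_of_eq ?_)
    linear_combination g (xmin z) * hac
  · -- gradient
    intro y
    rw [hasGradientAt_iff_isLittleO]
    set G : EuclideanSpace ℝ (Fin m) :=
      (WithLp.equiv 2 (Fin m → ℝ)).symm (fun i => A.mulVec (xmin y) i - b i) with hG
    have hGi : ∀ i, G i = A.mulVec (xmin y) i - b i := fun i => rfl
    have hinner : ∀ u : EuclideanSpace ℝ (Fin m),
        (inner ℝ G u : ℝ) = ∑ i, (A.mulVec (xmin y) i - b i) * (u i) := by
      intro u
      rw [PiLp.inner_apply]
      apply Finset.sum_congr rfl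
      intro i _
      rw [hGi]
      simp [RCLike.inner_apply]
      ring
    have key : ∀ y' : EuclideanSpace ℝ (Fin m),
        |φ y' - φ y - (inner ℝ G (y' - y) : ℝ)| ≤ L2 * ‖y' - y‖ ^ 2 := by
      intro y'
      have hB : ‖y' - y‖ ^ 2 = ∑ i, (y' i - y i) ^ 2 := by
        rw [eus_norm_sq' (y' - y)]
        exact Finset.sum_congr rfl fun i _ => by rw [PiLp.sub_apply]
      set B := ∑ i, (y' i - y i) ^ 2 with hBdef
      have hB0 : 0 ≤ B := Finset.sum_nonneg fun i _ => sq_nonneg _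
      have hinn : (inner ℝ G (y' - y) : ℝ)
          = ∑ i, (A.mulVec (xmin y) i - b i) * (y' i - y i) := by
        rw [hinner (y' - y)]
        exact Finset.sum_congr rfl fun i _ => by rw [PiLp.sub_apply]
      -- upper bound : err ≤ 0
      have hup : φ y' - φ y - (inner ℝ G (y' - y) : ℝ) ≤ 0 := by
        have h1 : φ y' ≤ g (xmin y) + ∑ i, y' i * (A.mulVec (xmin y) i - b i) := by
          rw [hphi y']
          exact hxmin_min y' (xmin y) (hxmin_mem y)
        have h2 : φ y = g (xmin y) + ∑ i, y i * (A.mulVec (xmin y) i - b i) := hphi y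
        have halg : (∑ i, y' i * (A.mulVec (xmin y) i - b i))
            - (∑ i, y i * (A.mulVec (xmin y) i - b i))
            - ∑ i, (A.mulVec (xmin y) i - b i) * (y' i - y i) = 0 := by
          rw [← Finset.sum_sub_distrib, ← Finset.sum_sub_distrib]
          apply Finset.sum_eq_zero
          intro i _
          ring
        rw [hinn]
        linarith
      -- lower bound
      have hlow : -(L2 * B) ≤ φ y' - φ y - (inner ℝ G (y' - y) : ℝ) := by
        set x' := xmin (y' : Fin m → ℝ) with hx'
        have h1 : φ y' = g x' + ∑ i, y' i * (A.mulVec x' i - b i) := hphi y'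
        have h2 : φ y ≤ g x' + ∑ i, y i * (A.mulVec x' i - b i) := by
          rw [hphi y]
          exact hxmin_min y x' (hxmin_mem y')
        set t := ∑ i, (y' i - y i) * (A.mulVec (x' - xmin y) i) with ht
        have herr : φ y' - φ y - (inner ℝ G (y' - y) : ℝ) ≥ t := by
          have halg : (∑ i, y' i * (A.mulVec x' i - b i))
              - (∑ i, y i * (A.mulVec x' i - b i))
              - (∑ i, (A.mulVec (xmin y) i - b i) * (y' i - y i)) = t := by
            rw [ht, ← Finset.sum_sub_distrib, ← Finset.sum_sub_distrib]
            apply Finset.sum_congr rfl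
            intro i _
            rw [Matrix.mulVec_sub, Pi.sub_apply]
            ring
          rw [hinn]
          linarith
        have hco := coercivity hp A b hQconv hsc hxmin_mem hxmin_min y' y
        have hq := lip_key hp A hL2nn hbd (x' - xmin y) (fun i => y i - y' i)
          (by simpa using hco)
        set q := ∑ i, (A.mulVec (x' - xmin y) i) ^ 2 with hqdef
        have hq0 : 0 ≤ q := Finset.sum_nonneg fun i _ => sq_nonneg _
        have hBB : ∑ i, (y i - y' i) ^ 2 = B := by
          rw [hBdef]
          exact Finset.sum_congr rfl fun i _ => by ring
        rw [hBB] at hq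
        have hCS : t ^ 2 ≤ B * q := by
          rw [ht]
          exact Finset.sum_mul_sq_le_sq_mul_sq _ _ _
        have htabs : t ^ 2 ≤ (L2 * B) ^ 2 := by nlinarith
        have : -(L2 * B) ≤ t := by nlinarith [mul_nonneg hL2nn hB0]
        linarith
      rw [hB] at *
      rw [abs_le]
      constructor <;> linarith
    rw [Asymptotics.isLittleO_iff]
    intro c hc
    have hball : Metric.ball y (c / (L2 + 1)) ∈ nhds y :=
      Metric.ball_mem_nhds _ (by positivity)
    filter_upwards [hball] with y' hy'
    rw [Metric.mem_ball, dist_eq_norm] at hy'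
    have hk := key y'
    have hn0 : 0 ≤ ‖y' - y‖ := norm_nonneg _
    have hstep : L2 * ‖y' - y‖ ≤ c := by
      have h1 : L2 * ‖y' - y‖ ≤ L2 * (c / (L2 + 1)) :=
        mul_le_mul_of_nonneg_left hy'.le hL2nn
      have h2 : L2 * (c / (L2 + 1)) ≤ c := by
        have hpos : (0:ℝ) < L2 + 1 := by linarith
        rw [mul_div_assoc', div_le_iff₀ hpos]
        nlinarith
      linarith
    rw [Real.norm_eq_abs]
    calc |φ y' - φ y - (inner ℝ G (y' - y) : ℝ)| ≤ L2 * ‖y' - y‖ ^ 2 := hk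
      _ = (L2 * ‖y' - y‖) * ‖y' - y‖ := by ring
      _ ≤ c * ‖y' - y‖ := mul_le_mul_of_nonneg_right hstep hn0
  · -- Lipschitz
    apply LipschitzWith.of_dist_le_mul
    intro y1 y2
    rw [Real.coe_toNNReal L2 hL2nn, dist_eq_norm, dist_eq_norm]
    have hco := coercivity hp A b hQconv hsc hxmin_mem hxmin_min y1 y2
    have hq := lip_key hp A hL2nn hbd (xmin y1 - xmin y2) (fun i => y2 i - y1 i)
      (by simpa using hco)
    have hL : ‖(WithLp.equiv 2 (Fin m → ℝ)).symm (fun i => A.mulVec (xmin y1) i - b i)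
        - (WithLp.equiv 2 (Fin m → ℝ)).symm (fun i => A.mulVec (xmin y2) i - b i)‖
        = Real.sqrt (∑ i, (A.mulVec (xmin y1 - xmin y2) i) ^ 2) := by
      rw [eus_norm' _]
      congr 1
      apply Finset.sum_congr rfl
      intro i _
      rw [PiLp.sub_apply]
      rw [Matrix.mulVec_sub]
      simp [WithLp.equiv_symm_apply, PiLp.toLp_apply]
      try ring
    have hR : ‖(y1 : EuclideanSpace ℝ (Fin m)) - y2‖ = Real.sqrt (∑ i, (y2 i - y1 i) ^ 2) := by
      rw [eus_norm' _]
      congr 1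
      apply Finset.sum_congr rfl
      intro i _
      rw [PiLp.sub_apply]
      ring
    rw [hL, hR]
    have h1 : Real.sqrt (∑ i, (A.mulVec (xmin y1 - xmin y2) i) ^ 2)
        ≤ Real.sqrt (L2 ^ 2 * ∑ i, (y2 i - y1 i) ^ 2) := Real.sqrt_le_sqrt hq
    have h2 : Real.sqrt (L2 ^ 2 * ∑ i, (y2 i - y1 i) ^ 2)
        = L2 * Real.sqrt (∑ i, (y2 i - y1 i) ^ 2) := by
      rw [Real.sqrt_mul (sq_nonneg _), Real.sqrt_sq hL2nn]
    linarith

  · intro hp2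
    subst hp2
    exact eig_part hn A hL2nn hbd hL2
  · intro hp1
    subst hp1
    exact col_part hn A hL2
end

section
/- Certificate bound: with notation as above, if F(ỹ_k) + g(x_k) + 2R̃‖Ax_k − b‖₂ ≤ γ, where R̃ ≥ max(‖ỹ_k‖₂, ‖y_*‖₂), then both |g(x_k) − g(x_*)| ≤ γ and R̃‖Ax_k − b‖₂ ≤ γ hold. -/
open BigOperators

/-- Lower bound on a dot product via Cauchy–Schwarz. -/
lemma dot_ge_neg_sqrt {m : ℕ} (y r : Fin m → ℝ) :
    -(Real.sqrt (∑ i, (y i) ^ 2) * Real.sqrt (∑ i, (r i) ^ 2)) ≤ ∑ i, y i * r i := by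
  have h := Real.sum_mul_le_sqrt_mul_sqrt Finset.univ (fun i => -y i) r
  have e1 : (∑ i, (fun i => -y i) i * r i) = -∑ i, y i * r i := by
    rw [← Finset.sum_neg_distrib]; exact Finset.sum_congr rfl fun i _ => by ring
  have e2 : (∑ i, ((fun i => -y i) i) ^ 2) = ∑ i, (y i) ^ 2 :=
    Finset.sum_congr rfl fun i _ => by ring
  rw [e1, e2] at h
  linarith

/-- Certificate bound: if `F(ỹ_k) + g(x_k) + 2R̃‖Ax_k - b‖₂ ≤ γ` with
`R̃ ≥ max(‖ỹ_k‖₂, ‖y⋆‖₂)` and zero duality gap `F(y⋆) = -g(x⋆)`, then both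
`|g(x_k) - g(x⋆)| ≤ γ` and `R̃‖Ax_k - b‖₂ ≤ γ`. -/
theorem certificate_bound (m n : ℕ) (A : Matrix (Fin m) (Fin n) ℝ) (b : Fin m → ℝ)
    (Q : Set (Fin n → ℝ)) (hQcomp : IsCompact Q) (hQconv : Convex ℝ Q)
    (g : (Fin n → ℝ) → ℝ) (hgcont : ContinuousOn g Q) (hgconv : ConvexOn ℝ Q g)
    (F : (Fin m → ℝ) → ℝ)
    (hF : ∀ y, F y = sSup {w : ℝ | ∃ x ∈ Q,
      w = (∑ i, y i * (b i - A.mulVec x i)) - g x})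
    (xstar : Fin n → ℝ) (hxstar_mem : xstar ∈ Q) (hxstar_feas : A.mulVec xstar = b)
    (hxstar_min : ∀ x ∈ Q, A.mulVec x = b → g xstar ≤ g x)
    (ystar : Fin m → ℝ) (hystar_min : ∀ y : Fin m → ℝ, F ystar ≤ F y)
    (hgap : F ystar = -g xstar)
    (xk : Fin n → ℝ) (hxk : xk ∈ Q)
    (yk : Fin m → ℝ) (Rt γ : ℝ)
    (hyk : Real.sqrt (∑ i, (yk i) ^ 2) ≤ Rt)
    (hys : Real.sqrt (∑ i, (ystar i) ^ 2) ≤ Rt)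
    (hcert : F yk + g xk + 2 * Rt * Real.sqrt (∑ i, (A.mulVec xk i - b i) ^ 2) ≤ γ) :
    |g xk - g xstar| ≤ γ ∧
    Rt * Real.sqrt (∑ i, (A.mulVec xk i - b i) ^ 2) ≤ γ := by
  set s : ℝ := Real.sqrt (∑ i, (A.mulVec xk i - b i) ^ 2) with hs
  have hs0 : 0 ≤ s := Real.sqrt_nonneg _
  have hRt0 : 0 ≤ Rt := le_trans (Real.sqrt_nonneg _) hyk
  -- F y ≥ ⟨y, b - A xk⟩ - g xk for any y
  have hFlb : ∀ y : Fin m → ℝ, (∑ i, y i * (b i - A.mulVec xk i)) - g xk ≤ F y := by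
    intro y
    rw [hF y]
    have himg : {w : ℝ | ∃ x ∈ Q, w = (∑ i, y i * (b i - A.mulVec x i)) - g x}
        = (fun x => (∑ i, y i * (b i - A.mulVec x i)) - g x) '' Q := by
      ext w; constructor
      · rintro ⟨x, hx, rfl⟩; exact ⟨x, hx, rfl⟩
      · rintro ⟨x, hx, rfl⟩; exact ⟨x, hx, rfl⟩
    have hcontOn : ContinuousOn (fun x => (∑ i, y i * (b i - A.mulVec x i)) - g x) Q := by
      apply ContinuousOn.sub _ hgcont
      apply continuousOn_finset_sum
      intro i _
      apply ContinuousOn.mul continuousOn_const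
      apply ContinuousOn.sub continuousOn_const
      exact (Continuous.continuousOn (by
        simp only [Matrix.mulVec, dotProduct]
        exact continuous_finset_sum _ fun j _ => (continuous_const.mul (continuous_apply j))))
    have hbdd : BddAbove {w : ℝ | ∃ x ∈ Q, w = (∑ i, y i * (b i - A.mulVec x i)) - g x} := by
      rw [himg]
      exact (hQcomp.image_of_continuousOn hcontOn).bddAbove
    exact le_csSup hbdd ⟨xk, hxk, rfl⟩
  -- Cauchy-Schwarz bounds: ⟨y, b - A xk⟩ ≥ -Rt * s for y = yk, ystar
  have hCS : ∀ y : Fin m → ℝ, Real.sqrt (∑ i, (y i) ^ 2) ≤ Rt →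
      -(Rt * s) ≤ ∑ i, y i * (b i - A.mulVec xk i) := by
    intro y hy
    have h1 := dot_ge_neg_sqrt y (fun i => b i - A.mulVec xk i)
    have h2 : (∑ i, (b i - A.mulVec xk i) ^ 2) = ∑ i, (A.mulVec xk i - b i) ^ 2 := by
      apply Finset.sum_congr rfl; intro i _; ring
    rw [h2] at h1
    have h3 : Real.sqrt (∑ i, (y i) ^ 2) * s ≤ Rt * s := by
      exact mul_le_mul_of_nonneg_right hy hs0
    calc -(Rt * s) ≤ -(Real.sqrt (∑ i, (y i) ^ 2) * s) := by linarith
    _ ≤ ∑ i, y i * (b i - A.mulVec xk i) := h1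
  have hFk1 : -(Rt * s) - g xk ≤ F yk := by
    have := hFlb yk; have := hCS yk hyk; linarith
  have hFk2 : -g xstar ≤ F yk := hgap ▸ hystar_min yk
  have hstar : -(Rt * s) - g xk ≤ -g xstar := by
    have := hFlb ystar; have := hCS ystar hys; linarith [hgap]
  constructor
  · rw [abs_le]
    constructor
    · -- g xstar - g xk ≤ Rt*s ≤ γ : from hstar and Rt*s ≤ γ
      nlinarith [hFk1, hcert, hs0, hRt0]
    · -- g xk - g xstar ≤ γ
      nlinarith [hFk2, hcert, hs0, hRt0]
  · nlinarith [hFk1, hcert]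
end
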